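/- Let ⟨·⟩ be a family of multilinear functionals on B(H) satisfying cyclicity and the commutation rule ⟨aV_1,...,V_n⟩ − ⟨V_1,...,V_n a⟩ = ⟨V_1,...,V_n,[D,a]⟩, and define φ_n(a_0,...,a_n) := ⟨a_0[D,a_1],[D,a_2],...,[D,a_n]⟩. Then bφ_1 = φ_2, i.e., φ_1(a_0 a_1, a_2) − φ_1(a_0, a_1 a_2) + φ_1(a_2 a_0, a_1) = φ_2(a_0, a_1, a_2) for all a_0, a_1, a_2 ∈ A. -/

import Mathlib

/-- With `φ_n(a_0,…,a_n) := ⟨a_0[D,a_1],[D,a_2],…,[D,a_n]⟩` defined from a family of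
multilinear brackets satisfying cyclicity (I) and the commutation rule (II),
one has `bφ_1 = φ_2`:
`φ_1(a_0 a_1, a_2) − φ_1(a_0, a_1 a_2) + φ_1(a_2 a_0, a_1) = φ_2(a_0, a_1, a_2)`. -/
theorem b_phi_one_eq_phi_two
    {H : Type*} [NormedAddCommGroup H] [InnerProductSpace ℂ H] [CompleteSpace H]
    (A : Subalgebra ℂ (H →L[ℂ] H)) (D : H →L[ℂ] H) (hD : IsSelfAdjoint D)
    (bracket : ∀ n : ℕ, MultilinearMap ℂ (fun _ : Fin n => H →L[ℂ] H) ℂ)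
    (hcycl : ∀ (n : ℕ) (V : Fin (n + 1) → (H →L[ℂ] H)),
      bracket (n + 1) V = bracket (n + 1) (fun i => V (i + 1)))
    (hcomm : ∀ (n : ℕ) (V : Fin (n + 1) → (H →L[ℂ] H)) (a : H →L[ℂ] H), a ∈ A →
      bracket (n + 1) (Function.update V 0 (a * V 0)) -
        bracket (n + 1) (Function.update V (Fin.last n) (V (Fin.last n) * a)) =
      bracket (n + 2) (Fin.snoc V (D * a - a * D)))
    (a₀ a₁ a₂ : H →L[ℂ] H) (h₀ : a₀ ∈ A) (h₁ : a₁ ∈ A) (h₂ : a₂ ∈ A) :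
    bracket 1 ![(a₀ * a₁) * (D * a₂ - a₂ * D)] -
      bracket 1 ![a₀ * (D * (a₁ * a₂) - (a₁ * a₂) * D)] +
      bracket 1 ![(a₂ * a₀) * (D * a₁ - a₁ * D)] =
    bracket 2 ![a₀ * (D * a₁ - a₁ * D), D * a₂ - a₂ * D] := by
  -- single-slot additivity of `bracket 1`
  have hupd : ∀ x z : H →L[ℂ] H, Function.update (![x] : Fin 1 → _) 0 z = ![z] := by
    intro x z; funext i; fin_cases i <;> simp
  have hadd : ∀ x y : H →L[ℂ] H,
      bracket 1 ![x + y] = bracket 1 ![x] + bracket 1 ![y] := by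
    intro x y
    have h := (bracket 1).map_update_add ![x] 0 x y
    rwa [hupd, hupd, hupd] at h
  -- Leibniz rule
  have hleib : a₀ * (D * (a₁ * a₂) - (a₁ * a₂) * D) =
      (a₀ * a₁) * (D * a₂ - a₂ * D) + (a₀ * (D * a₁ - a₁ * D)) * a₂ := by
    noncomm_ring
  -- commutation rule instance
  have hc := hcomm 0 ![a₀ * (D * a₁ - a₁ * D)] a₂ h₂
  have e1 : Function.update (![a₀ * (D * a₁ - a₁ * D)] : Fin 1 → _) 0
      (a₂ * (![a₀ * (D * a₁ - a₁ * D)] : Fin 1 → _) 0) = ![(a₂ * a₀) * (D * a₁ - a₁ * D)] := by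
    rw [hupd]; simp [mul_assoc]
  have e2 : Function.update (![a₀ * (D * a₁ - a₁ * D)] : Fin 1 → _) (Fin.last 0)
      ((![a₀ * (D * a₁ - a₁ * D)] : Fin 1 → _) (Fin.last 0) * a₂)
      = ![(a₀ * (D * a₁ - a₁ * D)) * a₂] := by
    have h0 : (Fin.last 0) = (0 : Fin 1) := rfl
    rw [h0, hupd]; simp
  have e3 : (Fin.snoc (![a₀ * (D * a₁ - a₁ * D)] : Fin 1 → _) (D * a₂ - a₂ * D) : Fin 2 → _)
      = ![a₀ * (D * a₁ - a₁ * D), D * a₂ - a₂ * D] := by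
    funext i; fin_cases i <;> simp [Fin.snoc]
  rw [e1, e2, e3] at hc
  norm_num at hc
  rw [hleib, hadd]
  linear_combination hc
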